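/- Let (𝔉,𝒱)_E be an (𝔉,𝒱)_E-structure and T a term. Suppose 𝔉' ⊆ 𝔉 satisfies Sup_s(T) ⊆ 𝔉' and |𝔉'| ≤ s. Then R_{I(𝔉'∧E)}(T) = R_{I(Sup_s(T)∧E)}(T). -/

import Mathlib

attribute [local instance] Classical.propDecidable

/-- A literal is a variable together with a polarity (`true` = positive). -/
abbrev Clause (σ : Type) := Finset (σ × Bool)

/-- A CNF formula is a finite set of clauses. -/
abbrev CNF (σ : Type) := Finset (Clause σ)

/-- The variables occurring in a clause. -/
def clauseVars {σ : Type} [DecidableEq σ] (C : Clause σ) : Finset σ := C.image Prod.fst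

/-- The variables occurring in a CNF formula. -/
def cnfVars {σ : Type} [DecidableEq σ] (φ : CNF σ) : Finset σ := φ.sup clauseVars

/-- A (total) assignment satisfies a literal. -/
def litSat {σ : Type} (α : σ → Bool) (l : σ × Bool) : Prop := α l.1 = l.2

/-- A (total) assignment satisfies a clause. -/
def clauseSat {σ : Type} (α : σ → Bool) (C : Clause σ) : Prop := ∃ l ∈ C, litSat α l

/-- A (total) assignment satisfies a CNF formula. -/
def cnfSat {σ : Type} (α : σ → Bool) (φ : CNF σ) : Prop := ∀ C ∈ φ, clauseSat α C

/-- Multilinearization: replace every exponent by its minimum with `1`. -/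
noncomputable def mlin {σ 𝔽 : Type} [CommRing 𝔽] (p : MvPolynomial σ 𝔽) :
    MvPolynomial σ 𝔽 :=
  ∑ m ∈ p.support,
    MvPolynomial.monomial (Finsupp.mapRange (fun e => min e 1) (by simp) m) (p.coeff m)

/-- The polynomial translation of a clause: identifying true with `0`, the clause
`⋁_{x∈L⁺} x ∨ ⋁_{y∈L⁻} ¬y` becomes `∏_{x∈L⁺} x · ∏_{y∈L⁻} (1 - y)`. -/
noncomputable def clausePoly {σ : Type} (𝔽 : Type) [CommRing 𝔽] (C : Clause σ) :
    MvPolynomial σ 𝔽 :=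
  ∏ l ∈ C, if l.2 then MvPolynomial.X l.1 else 1 - MvPolynomial.X l.1
/-- An admissible total order on multilinear monomials (identified with finite sets of
variables): a strict linear order in which lower-degree monomials come first and which is
compatible with multiplication by monomials on disjoint sets of variables. -/
structure AdmissibleOrder (σ : Type) [DecidableEq σ] where
  lt : Finset σ → Finset σ → Prop
  irrefl : ∀ S, ¬ lt S S
  trans : ∀ {S T U : Finset σ}, lt S T → lt T U → lt S U
  total : ∀ S T, S ≠ T → lt S T ∨ lt T S
  degree_lt : ∀ S T : Finset σ, S.card < T.card → lt S T
  mul_lt : ∀ S T m : Finset σ, lt S T → Disjoint m (S ∪ T) → lt (m ∪ S) (m ∪ T)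

/-- `T` is the leading term of `Q` with respect to the admissible order `ord`. -/
def IsLeadTerm {σ 𝔽 : Type} [DecidableEq σ] [CommRing 𝔽] (ord : AdmissibleOrder σ)
    (Q T : MvPolynomial σ 𝔽) : Prop :=
  ∃ m ∈ Q.support, T = MvPolynomial.monomial m (Q.coeff m) ∧
    ∀ m' ∈ Q.support, m' ≠ m → ord.lt m'.support m.support

/-- A term `T` is reducible modulo a set `I` of polynomials if `T` is the leading term of
some member of `I`. -/
def Reducible {σ 𝔽 : Type} [DecidableEq σ] [CommRing 𝔽] (ord : AdmissibleOrder σ)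
    (I : Set (MvPolynomial σ 𝔽)) (T : MvPolynomial σ 𝔽) : Prop :=
  ∃ Q ∈ I, IsLeadTerm ord Q T

/-- `R` is the reduction of `P` modulo `I`: `R` is multilinear, `P - R ∈ I`, and every term
of `R` is irreducible modulo `I`. -/
def IsReduction {σ 𝔽 : Type} [DecidableEq σ] [CommRing 𝔽] (ord : AdmissibleOrder σ)
    (I : Set (MvPolynomial σ 𝔽)) (P R : MvPolynomial σ 𝔽) : Prop :=
  mlin R = R ∧ P - R ∈ I ∧
    ∀ m ∈ R.support, ¬ Reducible ord I (MvPolynomial.monomial m (R.coeff m))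

/-- The reduction operator `R_I` modulo `I` (well defined on multilinear polynomials when
`I` is an ideal of the multilinear ring). -/
noncomputable def redOp {σ 𝔽 : Type} [DecidableEq σ] [CommRing 𝔽] (ord : AdmissibleOrder σ)
    (I : Set (MvPolynomial σ 𝔽)) (P : MvPolynomial σ 𝔽) : MvPolynomial σ 𝔽 :=
  if h : ∃ R, IsReduction ord I P R then h.choose else 0

/-- A subset of the multilinear polynomial ring is an ideal of that ring: it consists of
multilinear polynomials, contains `0`, and is closed under addition and under multiplication
(followed by multilinearization) by arbitrary polynomials. -/
def IsMLIdeal {σ 𝔽 : Type} [CommRing 𝔽] (I : Set (MvPolynomial σ 𝔽)) : Prop :=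
  0 ∈ I ∧ (∀ p ∈ I, mlin p = p) ∧ (∀ p ∈ I, ∀ q ∈ I, p + q ∈ I) ∧
    (∀ p ∈ I, ∀ q : MvPolynomial σ 𝔽, mlin (q * p) ∈ I)

/-- The multilinear (squarefree) monomial with support `m`. -/
noncomputable def monoOf {σ : Type} [DecidableEq σ] (m : Finset σ) : σ →₀ ℕ :=
  ∑ x ∈ m, Finsupp.single x 1
/-- A partial assignment with domain `D` and values `α` respects the CNF formula `E`:
every clause of `E` sharing a variable with `D` is satisfied by the assignment (via a
literal whose variable lies in `D`). -/
def Respects {σ : Type} [DecidableEq σ] (D : Finset σ) (α : σ → Bool) (E : CNF σ) : Prop :=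
  ∀ C ∈ E, (clauseVars C ∩ D).Nonempty → ∃ l ∈ C, l.1 ∈ D ∧ α l.1 = l.2

/-- A variable set `V` respects `E` if some assignment with domain `V` respects `E`. -/
def VRespects {σ : Type} [DecidableEq σ] (V : Finset σ) (E : CNF σ) : Prop :=
  ∃ α : σ → Bool, Respects V α E

/-- The formula `F` is respectfully satisfiable by the variable set `V` (with respect to
`E`): some assignment with domain `V` satisfies `F` and respects `E`. -/
def RSat {σ : Type} [DecidableEq σ] (E F : CNF σ) (V : Finset σ) : Prop :=
  ∃ α : σ → Bool, Respects V α E ∧ ∀ C ∈ F, ∃ l ∈ C, l.1 ∈ V ∧ α l.1 = l.2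

/-- An `(𝔉,𝒱)_E`-structure: a CNF formula `Ecnf`, a family `fam` of CNF formulas, and a
family `vfam` of variable sets, each respecting `Ecnf`. -/
structure FVStructure (σ : Type) [DecidableEq σ] where
  Ecnf : CNF σ
  fam : Finset (CNF σ)
  vfam : Finset (Finset σ)
  vfam_respects : ∀ V ∈ vfam, VRespects V Ecnf

/-- `F` and `V` are neighbours: they share a variable. -/
def Nbr {σ : Type} [DecidableEq σ] (F : CNF σ) (V : Finset σ) : Prop :=
  (cnfVars F ∩ V).Nonempty

/-- `F` and `V` are respectful neighbours. -/
def RNbr {σ : Type} [DecidableEq σ] (E F : CNF σ) (V : Finset σ) : Prop :=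
  Nbr F V ∧ RSat E F V

/-- The respectful boundary of a subfamily `𝔛 ⊆ fam`: all `V ∈ vfam` that are a respectful
neighbour of some `F ∈ 𝔛` and not a neighbour of any other member of `𝔛`. -/
noncomputable def rbdry {σ : Type} [DecidableEq σ] (S : FVStructure σ)
    (𝔛 : Finset (CNF σ)) : Finset (Finset σ) :=
  S.vfam.filter fun V =>
    ∃ F ∈ 𝔛, RNbr S.Ecnf F V ∧ ∀ F' ∈ 𝔛, F' ≠ F → ¬ Nbr F' V

/-- A respectful `(s,δ,ξ)`-boundary expander. -/
def IsRBExpander {σ : Type} [DecidableEq σ] (S : FVStructure σ) (s : ℕ) (δ ξ : ℝ) : Prop :=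
  ∀ 𝔛 ⊆ S.fam, 𝔛.card ≤ s → δ * (𝔛.card : ℝ) - ξ ≤ ((rbdry S 𝔛).card : ℝ)

/-- `𝔛` is `(s,𝒱')`-contained: `𝔛 ⊆ fam`, `|𝔛| ≤ s` and `∂(𝔛) ⊆ 𝒱'`. -/
def Contained {σ : Type} [DecidableEq σ] (S : FVStructure σ) (s : ℕ)
    (𝒱' : Finset (Finset σ)) (𝔛 : Finset (CNF σ)) : Prop :=
  𝔛 ⊆ S.fam ∧ 𝔛.card ≤ s ∧ rbdry S 𝔛 ⊆ 𝒱'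

/-- The `s`-support of `𝒱'`: the union of all `(s,𝒱')`-contained subsets of `fam`. -/
noncomputable def suppV {σ : Type} [DecidableEq σ] (S : FVStructure σ) (s : ℕ)
    (𝒱' : Finset (Finset σ)) : Finset (CNF σ) :=
  S.fam.filter fun F => ∃ 𝔛, Contained S s 𝒱' 𝔛 ∧ F ∈ 𝔛

/-- The overlap of a family of variable sets: the maximum number of sets that contain any
single variable. -/
noncomputable def overlap {σ : Type} [Fintype σ] [DecidableEq σ]
    (𝒱 : Finset (Finset σ)) : ℕ :=
  Finset.univ.sup fun x : σ => (𝒱.filter fun V => x ∈ V).card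

/-- The neighbourhood `N(T)` of a (multilinear) monomial `m`: all `V ∈ vfam` meeting it. -/
noncomputable def nbrsM {σ : Type} [DecidableEq σ] (S : FVStructure σ) (m : Finset σ) :
    Finset (Finset σ) :=
  S.vfam.filter fun V => (m ∩ V).Nonempty

/-- The neighbourhood of a subfamily `𝔛 ⊆ fam`. -/
noncomputable def nbrsF {σ : Type} [DecidableEq σ] (S : FVStructure σ)
    (𝔛 : Finset (CNF σ)) : Finset (Finset σ) :=
  S.vfam.filter fun V => ∃ F ∈ 𝔛, (cnfVars F ∩ V).Nonempty

/-- The `s`-support `Sup_s(T)` of a term with monomial `m`, i.e. `Sup_s(N(T))`. -/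
noncomputable def suppM {σ : Type} [DecidableEq σ] (S : FVStructure σ) (s : ℕ)
    (m : Finset σ) : Finset (CNF σ) :=
  suppV S s (nbrsM S m)

/-- All clauses of the CNF formula `𝔛 ∧ E`. -/
noncomputable def clausesOf {σ : Type} [DecidableEq σ] (S : FVStructure σ)
    (𝔛 : Finset (CNF σ)) : CNF σ :=
  𝔛.sup id ∪ S.Ecnf
/-- The ideal `I(𝔛 ∧ E)` of the multilinear ring generated by the polynomial translations
of all clauses of the formulas in `𝔛` together with all clauses of `E`. -/
def idealOf {σ : Type} (𝔽 : Type) [Field 𝔽] [DecidableEq σ] (S : FVStructure σ)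
    (𝔛 : Finset (CNF σ)) : Set (MvPolynomial σ 𝔽) :=
  { P | ∃ q : Clause σ → MvPolynomial σ 𝔽,
      P = mlin (∑ C ∈ clausesOf S 𝔛, q C * clausePoly 𝔽 C) }

/-- The neighbourhood `N(P)` of a polynomial: all `V ∈ vfam` meeting a variable of `P`. -/
noncomputable def nbrsP {σ 𝔽 : Type} [DecidableEq σ] [CommRing 𝔽] (S : FVStructure σ)
    (P : MvPolynomial σ 𝔽) : Finset (Finset σ) :=
  S.vfam.filter fun V => (P.vars ∩ V).Nonempty

set_option linter.unusedSectionVars false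
namespace Stmt8
open MvPolynomial
variable {𝔽 σ : Type} [Field 𝔽] [DecidableEq σ]

noncomputable def trunc (m : σ →₀ ℕ) : σ →₀ ℕ :=
  Finsupp.mapRange (fun e => min e 1) (by simp) m

lemma trunc_apply (m : σ →₀ ℕ) (x : σ) : trunc m x = min (m x) 1 := rfl

lemma trunc_support (m : σ →₀ ℕ) : (trunc m).support = m.support := by
  ext x; simp only [Finsupp.mem_support_iff, trunc_apply]; omega

lemma trunc_eq_self {m : σ →₀ ℕ} (h : ∀ x, m x ≤ 1) : trunc m = m := by
  ext x; have := h x; simp only [trunc_apply]; omega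

lemma mlin_def (p : MvPolynomial σ 𝔽) :
    mlin p = ∑ m ∈ p.support, monomial (trunc m) (p.coeff m) := rfl

lemma mlin_eq_sum (p : MvPolynomial σ 𝔽) (A : Finset (σ →₀ ℕ)) (hA : p.support ⊆ A) :
    mlin p = ∑ m ∈ A, monomial (trunc m) (p.coeff m) := by
  rw [mlin_def]
  refine Finset.sum_subset hA ?_
  intro m _ hm
  rw [notMem_support_iff.mp hm, map_zero]

lemma mlin_zero : mlin (0 : MvPolynomial σ 𝔽) = 0 := by
  rw [mlin_eq_sum 0 ∅ (by simp)]; simp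

lemma mlin_add (p q : MvPolynomial σ 𝔽) : mlin (p + q) = mlin p + mlin q := by
  rw [mlin_eq_sum (p+q) (p.support ∪ q.support) (support_add),
    mlin_eq_sum p (p.support ∪ q.support) (Finset.subset_union_left),
    mlin_eq_sum q (p.support ∪ q.support) (Finset.subset_union_right),
    ← Finset.sum_add_distrib]
  refine Finset.sum_congr rfl fun m _ => ?_
  rw [coeff_add, map_add]

lemma mlin_smul (c : 𝔽) (p : MvPolynomial σ 𝔽) : mlin (c • p) = c • mlin p := by
  rw [mlin_eq_sum (c • p) p.support (by
      intro m hm; rw [mem_support_iff] at hm ⊢; intro h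
      simp [MvPolynomial.coeff_smul, h] at hm), mlin_def, Finset.smul_sum]
  refine Finset.sum_congr rfl fun m _ => ?_
  rw [MvPolynomial.coeff_smul, smul_eq_mul, ← map_smul, smul_eq_mul]

lemma mlin_neg (p : MvPolynomial σ 𝔽) : mlin (-p) = - mlin p := by
  have := mlin_smul (-1 : 𝔽) p; simpa using this

lemma mlin_sub (p q : MvPolynomial σ 𝔽) : mlin (p - q) = mlin p - mlin q := by
  rw [sub_eq_add_neg, mlin_add, mlin_neg, sub_eq_add_neg]

lemma mlin_sum {ι : Type*} (s : Finset ι) (f : ι → MvPolynomial σ 𝔽) :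
    mlin (∑ i ∈ s, f i) = ∑ i ∈ s, mlin (f i) := by
  classical
  induction s using Finset.induction_on with
  | empty => simpa using mlin_zero
  | insert _ _ h ih => rw [Finset.sum_insert h, Finset.sum_insert h, mlin_add, ih]

lemma mlin_monomial (m : σ →₀ ℕ) (c : 𝔽) :
    mlin (monomial m c) = monomial (trunc m) c := by
  by_cases hc : c = 0
  · simp [hc, mlin_zero]
  · rw [mlin_def, support_monomial, if_neg hc, Finset.sum_singleton, coeff_monomial,
      if_pos rfl]

/-- multilinear polynomials: all exponents at most 1 -/
def ML (p : MvPolynomial σ 𝔽) : Prop := ∀ m ∈ p.support, ∀ x, m x ≤ 1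

lemma mlin_eq_self_of_ML {p : MvPolynomial σ 𝔽} (h : ML p) : mlin p = p := by
  conv_rhs => rw [p.as_sum]
  rw [mlin_def]
  exact Finset.sum_congr rfl fun m hm => by rw [trunc_eq_self (h m hm)]

lemma support_mlin_subset (p : MvPolynomial σ 𝔽) :
    (mlin p).support ⊆ p.support.image trunc := by
  intro n hn
  rw [mem_support_iff] at hn
  rw [mlin_def] at hn
  by_contra hne
  apply hn
  classical
  rw [MvPolynomial.coeff_sum]
  refine Finset.sum_eq_zero fun m hm => ?_
  rw [coeff_monomial, if_neg]
  intro h; exact hne (Finset.mem_image.mpr ⟨m, hm, h⟩)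

lemma ML_mlin (p : MvPolynomial σ 𝔽) : ML (mlin p) := by
  intro n hn x
  obtain ⟨m, _, rfl⟩ := Finset.mem_image.mp (support_mlin_subset p hn)
  simp [trunc_apply]

lemma mlin_mlin (p : MvPolynomial σ 𝔽) : mlin (mlin p) = mlin p :=
  mlin_eq_self_of_ML (ML_mlin p)

lemma ML_of_mlin_eq {p : MvPolynomial σ 𝔽} (h : mlin p = p) : ML p := by
  exact h ▸ ML_mlin p

end Stmt8
section Order
variable {σ : Type} [DecidableEq σ] (ord : AdmissibleOrder σ)

section
variable [Fintype σ]
/-- rank of a finset in the admissible order -/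
noncomputable def rnk (S : Finset σ) : ℕ :=
  (Finset.univ.filter fun B => ord.lt B S).card

lemma rnk_lt_rnk {S T : Finset σ} (h : ord.lt S T) : rnk ord S < rnk ord T := by
  apply Finset.card_lt_card
  constructor
  · intro B hB
    simp only [Finset.mem_filter, Finset.mem_univ, true_and] at hB ⊢
    exact ord.trans hB h
  · intro hsub
    have : S ∈ Finset.univ.filter fun B => ord.lt B T := by
      simp only [Finset.mem_filter, Finset.mem_univ, true_and]; exact h
    have := hsub this
    simp only [Finset.mem_filter, Finset.mem_univ, true_and] at this
    exact ord.irrefl S this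

end
lemma ord_le_of_not_lt {S T : Finset σ} (h : ¬ ord.lt T S) (hne : S ≠ T) : ord.lt S T :=
  (ord.total S T hne).resolve_right h

/-- a maximum of a nonempty finite family of finsets -/
lemma exists_ord_max [Fintype σ] {A : Finset (Finset σ)} (h : A.Nonempty) :
    ∃ M ∈ A, ∀ B ∈ A, B ≠ M → ord.lt B M := by
  obtain ⟨M, hM, hmax⟩ := A.exists_max_image (rnk ord) h
  exact ⟨M, hM, fun B hB hne => by
    rcases ord.total B M hne with h' | h'
    · exact h'
    · exact absurd (rnk_lt_rnk ord h') (not_lt.mpr (hmax B hB))⟩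

lemma card_le_of_lt {S T : Finset σ} (h : ord.lt S T) : S.card ≤ T.card := by
  by_contra hc
  exact ord.irrefl S (ord.trans h (ord.degree_lt _ _ (not_le.mp hc)))

/-- subsets of monomials below `M` are below `M` -/
lemma lt_of_subset_of_lt {S S' M : Finset σ} (hsub : S ⊆ S') (h : ord.lt S' M) :
    ord.lt S M := by
  have h1 : S'.card ≤ M.card := card_le_of_lt ord h
  rcases lt_or_eq_of_le (Finset.card_le_card hsub) with hlt | heq
  · exact ord.degree_lt _ _ (lt_of_lt_of_le hlt h1)
  · rwa [Finset.eq_of_subset_of_card_le hsub (le_of_eq heq.symm)]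

end Order
namespace Stmt8
open MvPolynomial
variable {𝔽 σ : Type} [Field 𝔽] [DecidableEq σ]

lemma monoOf_apply (S : Finset σ) (x : σ) : monoOf S x = if x ∈ S then 1 else 0 := by
  rw [monoOf]
  rw [Finset.sum_apply']
  simp [Finsupp.single_apply, Finset.sum_ite_eq' S x (fun _ => 1)]

lemma monoOf_support (S : Finset σ) : (monoOf S).support = S := by
  ext x; simp [Finsupp.mem_support_iff, monoOf_apply]

lemma monoOf_le (S : Finset σ) (x : σ) : monoOf S x ≤ 1 := by
  rw [monoOf_apply]; split <;> omega

lemma eq_monoOf {m : σ →₀ ℕ} (h : ∀ x, m x ≤ 1) : m = monoOf m.support := by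
  ext x
  rw [monoOf_apply]
  by_cases hx : x ∈ m.support
  · rw [if_pos hx]; have := h x; have := Finsupp.mem_support_iff.mp hx; omega
  · rw [if_neg hx]; exact Finsupp.notMem_support_iff.mp hx

lemma monoOf_inj {S T : Finset σ} (h : monoOf S = monoOf T) : S = T := by
  rw [← monoOf_support S, ← monoOf_support T, h]

/-- the value substituted for an assigned variable: `true ↦ 0`, `false ↦ 1` -/
def bval (α : σ → Bool) (x : σ) : 𝔽 := if α x then 0 else 1

/-- substitution of the partial assignment `(D, α)` -/
noncomputable def subst (D : Finset σ) (α : σ → Bool) :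
    MvPolynomial σ 𝔽 →ₐ[𝔽] MvPolynomial σ 𝔽 :=
  aeval fun x => if x ∈ D then C (bval α x) else X x

lemma subst_X_mem {D : Finset σ} {α : σ → Bool} {x : σ} (h : x ∈ D) :
    subst (𝔽 := 𝔽) D α (X x) = C (bval α x) := by
  simp [subst, h]

lemma subst_X_not_mem {D : Finset σ} {α : σ → Bool} {x : σ} (h : x ∉ D) :
    subst (𝔽 := 𝔽) D α (X x) = X x := by
  simp [subst, h]

lemma subst_monomial (D : Finset σ) (α : σ → Bool) (m : σ →₀ ℕ) (c : 𝔽) :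
    subst D α (monomial m c) =
      (∏ x ∈ m.support.filter (· ∈ D), (bval α x : 𝔽) ^ m x) •
        monomial (m.filter (· ∉ D)) c := by
  rw [subst, aeval_monomial, monomial_eq, Finsupp.prod, Finsupp.prod,
    smul_eq_C_mul]
  rw [← Finset.prod_filter_mul_prod_filter_not m.support (· ∈ D)]
  have h1 : ∏ x ∈ m.support.filter (· ∈ D),
      (if x ∈ D then C (bval α x) else X x) ^ m x
      = C (∏ x ∈ m.support.filter (· ∈ D), (bval α x : 𝔽) ^ m x) := by
    rw [map_prod]
    refine Finset.prod_congr rfl fun x hx => ?_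
    rw [if_pos (Finset.mem_filter.mp hx).2, map_pow]
  have h2 : ∏ x ∈ m.support.filter (¬ · ∈ D),
      (if x ∈ D then C (bval α x) else X x) ^ m x
      = ∏ x ∈ (m.filter (· ∉ D)).support, (X x : MvPolynomial σ 𝔽) ^ (m.filter (· ∉ D)) x := by
    rw [Finsupp.support_filter]
    refine Finset.prod_congr rfl ?_
    intro x hx
    have hxD : ¬ x ∈ D := by
      have := (Finset.mem_filter.mp hx).2; simpa using this
    rw [if_neg hxD, Finsupp.filter_apply_pos (fun x => x ∉ D) m hxD]
  rw [h1, h2]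
  have : algebraMap 𝔽 (MvPolynomial σ 𝔽) c = C c := rfl
  rw [this]
  ring

lemma subst_eq_of_disjoint {D : Finset σ} {α : σ → Bool} {p : MvPolynomial σ 𝔽}
    (h : ∀ x ∈ p.vars, x ∉ D) : subst D α p = p := by
  have := hom_congr_vars (f₁ := ((subst D α : MvPolynomial σ 𝔽 →ₐ[𝔽] MvPolynomial σ 𝔽) :
      MvPolynomial σ 𝔽 →+* MvPolynomial σ 𝔽)) (f₂ := RingHom.id _)
    (p₁ := p) (p₂ := p) ?_ ?_ rfl
  · exact this
  · ext c; simp [subst]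
  · intro i hi _
    simp only [RingHom.coe_coe, RingHom.id_apply]
    exact subst_X_not_mem (h i hi)

end Stmt8
namespace Stmt8
open MvPolynomial
variable {𝔽 σ : Type} [Field 𝔽] [DecidableEq σ]

lemma bval_pow {α : σ → Bool} {x : σ} {k : ℕ} (hk : 1 ≤ k) :
    (bval α x : 𝔽) ^ k = bval α x := by
  unfold bval
  split
  · rw [zero_pow (by omega)]
  · rw [one_pow]

lemma trunc_filter (m : σ →₀ ℕ) (D : Finset σ) :
    (trunc m).filter (· ∉ D) = trunc (m.filter (· ∉ D)) := by
  ext x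
  by_cases hx : x ∈ D
  · rw [Finsupp.filter_apply_neg _ _ (by simpa using hx), trunc_apply,
      Finsupp.filter_apply_neg _ _ (by simpa using hx)]
    simp
  · rw [Finsupp.filter_apply_pos _ _ (by simpa using hx), trunc_apply, trunc_apply,
      Finsupp.filter_apply_pos _ _ (by simpa using hx)]

lemma subst_mlin (D : Finset σ) (α : σ → Bool) (p : MvPolynomial σ 𝔽) :
    subst D α (mlin p) = mlin (subst D α p) := by
  conv_rhs => rw [p.as_sum]
  rw [mlin_def, map_sum, map_sum, mlin_sum]
  refine Finset.sum_congr rfl fun m _ => ?_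
  rw [subst_monomial, subst_monomial, mlin_smul, mlin_monomial, trunc_filter]
  congr 1
  rw [trunc_support]
  refine Finset.prod_congr rfl fun x hx => ?_
  have hx1 : 1 ≤ m x := by
    have := Finsupp.mem_support_iff.mp (Finset.mem_filter.mp hx).1; omega
  rw [trunc_apply, min_eq_right hx1, bval_pow hx1, bval_pow (le_refl 1)]

lemma filter_eq_monoOf {m : σ →₀ ℕ} (hml : ∀ x, m x ≤ 1) (D : Finset σ) :
    m.filter (· ∉ D) = monoOf (m.support \ D) := by
  ext x
  rw [monoOf_apply]
  by_cases hx : x ∈ D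
  · rw [Finsupp.filter_apply_neg _ _ (by simpa using hx), if_neg (by simp [hx])]
  · rw [Finsupp.filter_apply_pos _ _ (by simpa using hx)]
    by_cases hs : x ∈ m.support
    · rw [if_pos (Finset.mem_sdiff.mpr ⟨hs, hx⟩)]
      have := hml x; have := Finsupp.mem_support_iff.mp hs; omega
    · rw [if_neg (by simp [hs, hx])]
      exact Finsupp.notMem_support_iff.mp hs

/-- substitution on a multilinear monomial -/
lemma subst_monomial_ML {m : σ →₀ ℕ} (hml : ∀ x, m x ≤ 1) (D : Finset σ)
    (α : σ → Bool) (c : 𝔽) :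
    subst D α (monomial m c) =
      (∏ x ∈ m.support.filter (· ∈ D), (bval α x : 𝔽)) •
        monomial (monoOf (m.support \ D)) c := by
  rw [subst_monomial, filter_eq_monoOf hml]
  congr 1
  refine Finset.prod_congr rfl fun x hx => ?_
  have hx1 : 1 ≤ m x := by
    have := Finsupp.mem_support_iff.mp (Finset.mem_filter.mp hx).1; omega
  rw [bval_pow hx1]

lemma bprod_cases (α : σ → Bool) (A : Finset σ) :
    (∏ x ∈ A, (bval α x : 𝔽)) = 0 ∨ (∏ x ∈ A, (bval α x : 𝔽)) = 1 := by
  by_cases h : ∀ x ∈ A, α x = false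
  · right
    refine Finset.prod_eq_one fun x hx => ?_
    unfold bval; rw [h x hx]; simp
  · left
    push_neg at h
    obtain ⟨x, hx, hαx⟩ := h
    refine Finset.prod_eq_zero hx ?_
    unfold bval
    rw [if_pos (by simpa using hαx)]

end Stmt8
namespace Stmt8
open MvPolynomial
variable {𝔽 σ : Type} [Field 𝔽] [DecidableEq σ]

/-- `m` is the leading monomial of `Q` -/
def LeadMonAt (ord : AdmissibleOrder σ) (Q : MvPolynomial σ 𝔽) (m : σ →₀ ℕ) : Prop :=
  m ∈ Q.support ∧ ∀ m' ∈ Q.support, m' ≠ m → ord.lt m'.support m.support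

lemma subst_as_sum {Q : MvPolynomial σ 𝔽} (hml : mlin Q = Q) (D : Finset σ)
    (α : σ → Bool) :
    subst D α Q = ∑ m ∈ Q.support,
      (∏ x ∈ m.support.filter (· ∈ D), (bval α x : 𝔽)) •
        monomial (monoOf (m.support \ D)) (Q.coeff m) := by
  conv_lhs => rw [Q.as_sum, map_sum]
  refine Finset.sum_congr rfl fun m hm => ?_
  exact subst_monomial_ML (ML_of_mlin_eq hml m hm) D α _

lemma subst_coeff {Q : MvPolynomial σ 𝔽} (hml : mlin Q = Q) (D : Finset σ)
    (α : σ → Bool) (n : σ →₀ ℕ) :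
    (subst D α Q).coeff n = ∑ m ∈ Q.support,
      (∏ x ∈ m.support.filter (· ∈ D), (bval α x : 𝔽)) *
        (if monoOf (m.support \ D) = n then Q.coeff m else 0) := by
  rw [subst_as_sum hml D α]
  rw [MvPolynomial.coeff_sum]
  refine Finset.sum_congr rfl fun m _ => ?_
  rw [MvPolynomial.coeff_smul, coeff_monomial, smul_eq_mul]

lemma subst_lead (ord : AdmissibleOrder σ) {Q : MvPolynomial σ 𝔽} {m₀ : σ →₀ ℕ}
    (hml : mlin Q = Q) (hL : LeadMonAt ord Q m₀)
    (D : Finset σ) (α : σ → Bool) (hdisj : ∀ x ∈ m₀.support, x ∉ D) :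
    (subst D α Q).coeff m₀ = Q.coeff m₀ ∧
      ∀ n ∈ (subst D α Q).support, n ≠ m₀ → ord.lt n.support m₀.support := by
  obtain ⟨h₀, hlead⟩ := hL
  have hm₀ml : ∀ x, m₀ x ≤ 1 := ML_of_mlin_eq hml m₀ h₀
  have hm₀eq : m₀ = monoOf m₀.support := eq_monoOf hm₀ml
  have hsd : m₀.support \ D = m₀.support := by
    ext x
    simp only [Finset.mem_sdiff]
    exact ⟨fun h => h.1, fun h => ⟨h, hdisj x h⟩⟩
  constructor
  · have hz : ∀ m ∈ Q.support, m ≠ m₀ →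
        (∏ x ∈ m.support.filter (· ∈ D), (bval α x : 𝔽)) *
          (if monoOf (m.support \ D) = m₀ then Q.coeff m else 0) = 0 := by
      intro m hm hne
      rw [if_neg, mul_zero]
      intro heq
      have hms : m.support \ D = m₀.support := by
        have := congrArg Finsupp.support heq
        rwa [monoOf_support, hm₀eq, monoOf_support] at this
      have hsub : m₀.support ⊆ m.support := by
        rw [← hms]; exact Finset.sdiff_subset
      have hlt := hlead m hm hne
      by_cases hcase : m.support = m₀.support
      · apply hne
        rw [eq_monoOf (ML_of_mlin_eq hml m hm), hcase, ← hm₀eq]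
      · have hss : m₀.support ⊂ m.support :=
          Finset.ssubset_iff_subset_ne.mpr ⟨hsub, fun h => hcase h.symm⟩
        exact absurd (ord.trans hlt (ord.degree_lt _ _ (Finset.card_lt_card hss)))
          (ord.irrefl _)
    rw [subst_coeff hml D α m₀, Finset.sum_eq_single_of_mem m₀ h₀ hz,
      if_pos (by rw [hsd]; exact hm₀eq.symm)]
    have hfil : m₀.support.filter (· ∈ D) = ∅ := by
      rw [Finset.filter_eq_empty_iff]
      exact fun {x} hx => hdisj x hx
    rw [hfil, Finset.prod_empty, one_mul]
  · intro n hn hne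
    have hcoeff := MvPolynomial.mem_support_iff.mp hn
    rw [subst_coeff hml D α n] at hcoeff
    obtain ⟨m, hm, hterm⟩ := Finset.exists_ne_zero_of_sum_ne_zero hcoeff
    have heq : monoOf (m.support \ D) = n := by
      by_contra h
      rw [if_neg h, mul_zero] at hterm
      exact hterm rfl
    have hnsub : n.support ⊆ m.support := by
      rw [← heq, monoOf_support]
      exact Finset.sdiff_subset
    by_cases hcase : m = m₀
    · subst hcase
      rw [hsd, ← hm₀eq] at heq
      exact absurd heq.symm hne
    · exact lt_of_subset_of_lt ord hnsub (hlead m hm hcase)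

lemma subst_LeadMonAt (ord : AdmissibleOrder σ) {Q : MvPolynomial σ 𝔽} {m₀ : σ →₀ ℕ}
    (hml : mlin Q = Q) (hL : LeadMonAt ord Q m₀)
    (D : Finset σ) (α : σ → Bool) (hdisj : ∀ x ∈ m₀.support, x ∉ D) :
    LeadMonAt ord (subst D α Q) m₀ ∧ (subst D α Q).coeff m₀ = Q.coeff m₀ := by
  obtain ⟨hc, hlt⟩ := subst_lead ord hml hL D α hdisj
  refine ⟨⟨?_, hlt⟩, hc⟩
  rw [MvPolynomial.mem_support_iff, hc]
  exact MvPolynomial.mem_support_iff.mp hL.1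

end Stmt8
namespace Stmt8
open MvPolynomial
variable {𝔽 σ : Type} [Field 𝔽] [DecidableEq σ]

lemma vars_clausePoly_subset (C : Clause σ) : (clausePoly 𝔽 C).vars ⊆ clauseVars C := by
  refine subset_trans (vars_prod _) ?_
  intro x hx
  rw [Finset.mem_biUnion] at hx
  obtain ⟨l, hl, hx⟩ := hx
  have : x = l.1 := by
    by_cases h2 : l.2
    · rw [if_pos h2] at hx
      rw [vars_X] at hx
      simpa using hx
    · rw [if_neg h2] at hx
      have := vars_sub_subset (p := (1 : MvPolynomial σ 𝔽)) (q := X l.1) hx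
      rw [vars_one] at this
      simp only [Finset.empty_union, vars_X, Finset.mem_singleton] at this
      exact this
  rw [this]
  exact Finset.mem_image_of_mem Prod.fst hl

lemma subst_clausePoly_eq {D : Finset σ} {α : σ → Bool} {C : Clause σ}
    (h : ∀ x ∈ clauseVars C, x ∉ D) :
    subst D α (clausePoly 𝔽 C) = clausePoly 𝔽 C :=
  subst_eq_of_disjoint fun x hx => h x (vars_clausePoly_subset C hx)

lemma subst_clausePoly_zero {D : Finset σ} {α : σ → Bool} {C : Clause σ}
    {l : σ × Bool} (hl : l ∈ C) (hD : l.1 ∈ D) (hα : α l.1 = l.2) :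
    subst D α (clausePoly 𝔽 C) = 0 := by
  rw [clausePoly, map_prod]
  refine Finset.prod_eq_zero hl ?_
  by_cases h2 : l.2
  · rw [if_pos h2, subst_X_mem hD]
    unfold bval
    rw [hα, h2, if_pos rfl, map_zero]
  · rw [if_neg h2, map_sub, map_one, subst_X_mem hD]
    unfold bval
    rw [hα]
    have : (l.2 = true) = False := by simp [h2]
    rw [if_neg (by simp [h2])]
    rw [map_one, sub_self]

variable (S : FVStructure σ)

lemma idealOf_zero (𝔜 : Finset (CNF σ)) : (0 : MvPolynomial σ 𝔽) ∈ idealOf 𝔽 S 𝔜 := by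
  refine ⟨0, ?_⟩
  simp [mlin_zero]

lemma idealOf_ml {𝔜 : Finset (CNF σ)} {P : MvPolynomial σ 𝔽} (h : P ∈ idealOf 𝔽 S 𝔜) :
    mlin P = P := by
  obtain ⟨q, rfl⟩ := h
  exact mlin_mlin _

lemma idealOf_add {𝔜 : Finset (CNF σ)} {P P' : MvPolynomial σ 𝔽}
    (h : P ∈ idealOf 𝔽 S 𝔜) (h' : P' ∈ idealOf 𝔽 S 𝔜) : P + P' ∈ idealOf 𝔽 S 𝔜 := by
  obtain ⟨q, rfl⟩ := h
  obtain ⟨q', rfl⟩ := h'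
  refine ⟨q + q', ?_⟩
  rw [← mlin_add, ← Finset.sum_add_distrib]
  congr 1
  refine Finset.sum_congr rfl fun C _ => ?_
  rw [Pi.add_apply, add_mul]

lemma idealOf_smul {𝔜 : Finset (CNF σ)} {P : MvPolynomial σ 𝔽} (c : 𝔽)
    (h : P ∈ idealOf 𝔽 S 𝔜) : c • P ∈ idealOf 𝔽 S 𝔜 := by
  obtain ⟨q, rfl⟩ := h
  refine ⟨c • q, ?_⟩
  rw [← mlin_smul, Finset.smul_sum]
  congr 1
  refine Finset.sum_congr rfl fun C _ => ?_
  rw [Pi.smul_apply, smul_mul_assoc]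

lemma idealOf_neg {𝔜 : Finset (CNF σ)} {P : MvPolynomial σ 𝔽}
    (h : P ∈ idealOf 𝔽 S 𝔜) : -P ∈ idealOf 𝔽 S 𝔜 := by
  have := idealOf_smul S (-1 : 𝔽) h
  simpa using this

lemma idealOf_sub {𝔜 : Finset (CNF σ)} {P P' : MvPolynomial σ 𝔽}
    (h : P ∈ idealOf 𝔽 S 𝔜) (h' : P' ∈ idealOf 𝔽 S 𝔜) : P - P' ∈ idealOf 𝔽 S 𝔜 := by
  rw [sub_eq_add_neg]
  exact idealOf_add S h (idealOf_neg S h')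

lemma clausesOf_mono {𝔜 𝔜' : Finset (CNF σ)} (h : 𝔜 ⊆ 𝔜') :
    clausesOf S 𝔜 ⊆ clausesOf S 𝔜' := by
  unfold clausesOf
  exact Finset.union_subset_union (Finset.sup_mono h) (le_refl _)

lemma idealOf_mono {𝔜 𝔜' : Finset (CNF σ)} (h : 𝔜 ⊆ 𝔜') :
    idealOf 𝔽 S 𝔜 ⊆ idealOf 𝔽 S 𝔜' := by
  rintro P ⟨q, rfl⟩
  refine ⟨fun C => if C ∈ clausesOf S 𝔜 then q C else 0, ?_⟩
  congr 1
  have h1 : ∀ C ∈ clausesOf S 𝔜', C ∉ clausesOf S 𝔜 →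
      (if C ∈ clausesOf S 𝔜 then q C else 0) * clausePoly 𝔽 C = 0 := by
    intro C _ hC; rw [if_neg hC, zero_mul]
  rw [← Finset.sum_subset (clausesOf_mono S h) h1]
  exact Finset.sum_congr rfl fun C hC => by rw [if_pos hC]

/-- reducibility of a monomial (coefficient-free version) -/
def RedN (ord : AdmissibleOrder σ) (I : Set (MvPolynomial σ 𝔽)) (n : σ →₀ ℕ) : Prop :=
  ∃ Q ∈ I, LeadMonAt ord Q n

lemma support_smul_eq {c : 𝔽} (hc : c ≠ 0) (p : MvPolynomial σ 𝔽) :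
    (c • p).support = p.support := by
  ext m
  simp only [MvPolynomial.mem_support_iff, MvPolynomial.coeff_smul, smul_eq_mul]
  exact ⟨fun h h' => h (by rw [h', mul_zero]), fun h => mul_ne_zero hc h⟩

lemma red_iff {ord : AdmissibleOrder σ} (𝔜 : Finset (CNF σ)) (n : σ →₀ ℕ) {c : 𝔽}
    (hc : c ≠ 0) :
    Reducible ord (idealOf 𝔽 S 𝔜) (monomial n c) ↔ RedN ord (idealOf 𝔽 S 𝔜) n := by
  constructor
  · rintro ⟨Q, hQ, m, hm, heq, hlt⟩
    rcases (monomial_eq_monomial_iff _ _ _ _).mp heq with ⟨rfl, _⟩ | ⟨h0, _⟩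
    · exact ⟨Q, hQ, hm, hlt⟩
    · exact absurd h0 hc
  · rintro ⟨Q, hQ, hm, hlt⟩
    have hQn : Q.coeff n ≠ 0 := MvPolynomial.mem_support_iff.mp hm
    have hd : c / Q.coeff n ≠ 0 := div_ne_zero hc hQn
    refine ⟨(c / Q.coeff n) • Q, idealOf_smul S _ hQ, n, ?_, ?_, ?_⟩
    · rw [support_smul_eq hd]; exact hm
    · rw [MvPolynomial.coeff_smul, smul_eq_mul, div_mul_cancel₀ _ hQn]
    · intro m' hm' hne
      rw [support_smul_eq hd] at hm'
      exact hlt m' hm' hne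

end Stmt8
namespace Stmt8
open MvPolynomial
variable {𝔽 σ : Type} [Field 𝔽] [DecidableEq σ]

/-- a polynomial avoids the domain `D` -/
def Avoids (D : Finset σ) (p : MvPolynomial σ 𝔽) : Prop :=
  ∀ m ∈ p.support, ∀ x ∈ m.support, x ∉ D

lemma subst_avoids {Q : MvPolynomial σ 𝔽} (hml : mlin Q = Q) (D : Finset σ)
    (α : σ → Bool) : Avoids D (subst D α Q) := by
  intro n hn x hx
  have hcoeff := MvPolynomial.mem_support_iff.mp hn
  rw [subst_coeff hml D α n] at hcoeff
  obtain ⟨m, _, hterm⟩ := Finset.exists_ne_zero_of_sum_ne_zero hcoeff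
  have heq : monoOf (m.support \ D) = n := by
    by_contra h
    rw [if_neg h, mul_zero] at hterm
    exact hterm rfl
  rw [← heq, monoOf_support] at hx
  exact (Finset.mem_sdiff.mp hx).2

/-- maximal monomial of a multilinear polynomial -/
lemma exists_lead [Fintype σ] (ord : AdmissibleOrder σ) {d : MvPolynomial σ 𝔽}
    (hml : mlin d = d) {A : Finset (σ →₀ ℕ)} (hA : A ⊆ d.support) (hne : A.Nonempty) :
    ∃ n ∈ A, ∀ m ∈ A, m ≠ n → ord.lt m.support n.support := by
  obtain ⟨n, hn, hmax⟩ := A.exists_max_image (fun m => rnk ord m.support) hne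
  refine ⟨n, hn, fun m hm hne' => ?_⟩
  have hsc : m.support ≠ n.support := by
    intro h
    apply hne'
    rw [eq_monoOf (ML_of_mlin_eq hml m (hA hm)), h,
      ← eq_monoOf (ML_of_mlin_eq hml n (hA hn))]
  rcases ord.total m.support n.support hsc with h | h
  · exact h
  · exact absurd (rnk_lt_rnk ord h) (not_lt.mpr (hmax m hm))

variable [Fintype σ] (ord : AdmissibleOrder σ) (S : FVStructure σ)

lemma red_unique {𝔜 : Finset (CNF σ)} {P R R' : MvPolynomial σ 𝔽}
    (h : IsReduction ord (idealOf 𝔽 S 𝔜) P R)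
    (h' : IsReduction ord (idealOf 𝔽 S 𝔜) P R') : R = R' := by
  by_contra hne
  set d := R - R' with hd
  have hdI : d ∈ idealOf 𝔽 S 𝔜 := by
    have := idealOf_sub S h'.2.1 h.2.1
    have heq : P - R' - (P - R) = R - R' := by ring
    rwa [heq] at this
  have hdml : mlin d = d := by rw [hd, mlin_sub, h.1, h'.1]
  have hdne : d ≠ 0 := fun h0 => hne (by rw [← sub_eq_zero]; exact h0)
  obtain ⟨n, hn, hmax⟩ := exists_lead ord hdml (Finset.Subset.refl d.support)
    (support_nonempty.mpr hdne)
  have hRedN : RedN ord (idealOf 𝔽 S 𝔜) n := ⟨d, hdI, hn, hmax⟩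
  have hcn : d.coeff n ≠ 0 := MvPolynomial.mem_support_iff.mp hn
  have hcd : d.coeff n = R.coeff n - R'.coeff n := by rw [hd, coeff_sub]
  by_cases hR : R.coeff n ≠ 0
  · exact h.2.2 n (MvPolynomial.mem_support_iff.mpr hR)
      ((red_iff S 𝔜 n hR).mpr hRedN)
  · push_neg at hR
    have hR' : R'.coeff n ≠ 0 := by
      intro h0; rw [hcd, hR, h0, sub_zero] at hcn; exact hcn rfl
    exact h'.2.2 n (MvPolynomial.mem_support_iff.mpr hR')
      ((red_iff S 𝔜 n hR').mpr hRedN)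

lemma exists_reduction_avoiding {𝔜 : Finset (CNF σ)} (D : Finset σ) (α : σ → Bool)
    (hstab : ∀ Q ∈ idealOf 𝔽 S 𝔜, subst D α Q ∈ idealOf 𝔽 S 𝔜)
    (T : MvPolynomial σ 𝔽) (hTml : mlin T = T) (hTfree : Avoids D T) :
    ∃ R, IsReduction ord (idealOf 𝔽 S 𝔜) T R ∧ Avoids D R := by
  set I := idealOf 𝔽 S 𝔜 with hI
  have main : ∀ N : ℕ, ∀ R' : MvPolynomial σ 𝔽, mlin R' = R' → T - R' ∈ I →
      Avoids D R' → (∀ m ∈ R'.support, RedN ord I m → rnk ord m.support < N) →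
      ∃ R, IsReduction ord I T R ∧ Avoids D R := by
    intro N
    induction N using Nat.strong_induction_on with
    | _ N IH =>
      intro R' hml hTR hfree hbound
      by_cases hred : ∃ m ∈ R'.support, RedN ord I m
      · -- take the maximal reducible monomial
        set A := R'.support.filter (fun m => RedN ord I m) with hA
        have hAne : A.Nonempty := by
          obtain ⟨m, hm, hr⟩ := hred
          exact ⟨m, Finset.mem_filter.mpr ⟨hm, hr⟩⟩
        obtain ⟨n₀, hn₀A, hn₀max⟩ := exists_lead ord hml (Finset.filter_subset _ _) hAne
        have hn₀s : n₀ ∈ R'.support := (Finset.mem_filter.mp hn₀A).1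
        have hn₀r : RedN ord I n₀ := (Finset.mem_filter.mp hn₀A).2
        obtain ⟨Q, hQI, hQn, hQlt⟩ := hn₀r
        have hQc : Q.coeff n₀ ≠ 0 := MvPolynomial.mem_support_iff.mp hQn
        -- scale Q so that its lead coefficient equals that of R'
        set c := R'.coeff n₀ / Q.coeff n₀ with hc
        have hcne : c ≠ 0 := div_ne_zero (MvPolynomial.mem_support_iff.mp hn₀s) hQc
        set Q2 := c • Q with hQ2
        have hQ2I : Q2 ∈ I := idealOf_smul S c hQI
        have hQ2ml : mlin Q2 = Q2 := idealOf_ml S hQ2I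
        have hQ2L : LeadMonAt ord Q2 n₀ := by
          refine ⟨by rw [hQ2, support_smul_eq hcne]; exact hQn, ?_⟩
          intro m' hm' hne'
          rw [hQ2, support_smul_eq hcne] at hm'
          exact hQlt m' hm' hne'
        have hn₀free : ∀ x ∈ n₀.support, x ∉ D := hfree n₀ hn₀s
        set Q' := subst D α Q2 with hQ'
        have hQ'I : Q' ∈ I := hstab Q2 hQ2I
        obtain ⟨hQ'L, hQ'c⟩ := subst_LeadMonAt ord hQ2ml hQ2L D α hn₀free
        have hQ'c0 : Q'.coeff n₀ = R'.coeff n₀ := by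
          rw [hQ', hQ'c, hQ2, MvPolynomial.coeff_smul, smul_eq_mul, hc,
            div_mul_cancel₀ _ hQc]
        set R'' := R' - Q' with hR''
        have hR''ml : mlin R'' = R'' := by
          rw [hR'', mlin_sub, hml, idealOf_ml S hQ'I]
        have hTR'' : T - R'' ∈ I := by
          have := idealOf_add S hTR hQ'I
          have heq : T - R' + Q' = T - R'' := by rw [hR'']; ring
          rwa [heq] at this
        have hfree'' : Avoids D R'' := by
          intro m hm x hx
          rcases Finset.mem_union.mp (support_sub σ R' Q' hm) with h | h
          · exact hfree m h x hx
          · exact subst_avoids hQ2ml D α m h x hx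
        have hcoeffn₀ : R''.coeff n₀ = 0 := by
          rw [hR'', coeff_sub, hQ'c0, sub_self]
        have hbound'' : ∀ m ∈ R''.support, RedN ord I m →
            rnk ord m.support < rnk ord n₀.support := by
          intro m hm hr
          have hmn₀ : m ≠ n₀ := by
            intro h; rw [h] at hm
            exact MvPolynomial.mem_support_iff.mp hm hcoeffn₀
          rcases Finset.mem_union.mp (support_sub σ R' Q' hm) with h | h
          · exact rnk_lt_rnk ord (hn₀max m (Finset.mem_filter.mpr ⟨h, hr⟩) hmn₀)
          · exact rnk_lt_rnk ord (hQ'L.2 m h hmn₀)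
        exact IH (rnk ord n₀.support) (hbound n₀ hn₀s ⟨Q, hQI, hQn, hQlt⟩) R'' hR''ml hTR'' hfree'' hbound''
      · -- R' is already the reduction
        push_neg at hred
        refine ⟨R', ⟨hml, hTR, ?_⟩, hfree⟩
        intro m hm hcontra
        exact hred m hm ((red_iff S 𝔜 m (MvPolynomial.mem_support_iff.mp hm)).mp hcontra)
  refine main (Fintype.card (Finset σ) + 1) T hTml (by
      have : T - T = 0 := sub_self T
      rw [this]; exact idealOf_zero S 𝔜) hTfree ?_
  intro m _ _
  have : rnk ord m.support ≤ Fintype.card (Finset σ) := by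
    rw [rnk, ← Finset.card_univ]
    exact Finset.card_le_card (Finset.filter_subset _ _)
  omega

end Stmt8
namespace Stmt8
variable {σ : Type} [DecidableEq σ]

/-- combine a priority list of partial assignments -/
def combine : List (Finset σ × (σ → Bool)) → σ → Bool
  | [], _ => false
  | (p :: L), x => if x ∈ p.1 then p.2 x else combine L x

/-- the union of the domains -/
def domsOf : List (Finset σ × (σ → Bool)) → Finset σ
  | [] => ∅
  | (p :: L) => p.1 ∪ domsOf L

lemma mem_domsOf {L : List (Finset σ × (σ → Bool))} {x : σ} :
    x ∈ domsOf L ↔ ∃ p ∈ L, x ∈ p.1 := by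
  induction L with
  | nil => simp [domsOf]
  | cons p L IH => simp [domsOf, IH]

lemma clauseVars_subset_cnfVars {C : Clause σ} {F : CNF σ} (h : C ∈ F) :
    clauseVars C ⊆ cnfVars F := by
  have := Finset.le_sup (f := clauseVars) h
  exact this

lemma combine_respects {E : CNF σ} {L : List (Finset σ × (σ → Bool))}
    (h : ∀ p ∈ L, Respects p.1 p.2 E) :
    Respects (domsOf L) (combine L) E := by
  induction L with
  | nil =>
    intro C _ hne
    simp [domsOf] at hne
  | cons p L IH =>
    intro C hC hne
    by_cases hV : (clauseVars C ∩ p.1).Nonempty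
    · obtain ⟨l, hl, hlV, hlval⟩ := h p List.mem_cons_self C hC hV
      refine ⟨l, hl, Finset.mem_union_left _ hlV, ?_⟩
      rw [combine, if_pos hlV, hlval]
    · have hne' : (clauseVars C ∩ domsOf L).Nonempty := by
        obtain ⟨x, hx⟩ := hne
        rw [Finset.mem_inter, domsOf, Finset.mem_union] at hx
        rcases hx.2 with h' | h'
        · exact absurd ⟨x, Finset.mem_inter.mpr ⟨hx.1, h'⟩⟩ hV
        · exact ⟨x, Finset.mem_inter.mpr ⟨hx.1, h'⟩⟩
      obtain ⟨l, hl, hlD, hlval⟩ := IH (fun p' hp' => h p' (List.mem_cons_of_mem _ hp')) C hC hne'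
      have hlp : l.1 ∉ p.1 := by
        intro hmem
        exact hV ⟨l.1, Finset.mem_inter.mpr ⟨Finset.mem_image_of_mem _ hl, hmem⟩⟩
      refine ⟨l, hl, Finset.mem_union_right _ hlD, ?_⟩
      rw [combine, if_neg hlp, hlval]

/-- an entry of the peeling list: a formula, a variable set, and an assignment -/
abbrev Entry (σ : Type) := CNF σ × Finset σ × (σ → Bool)

def tl (L : List (Entry σ)) : List (Finset σ × (σ → Bool)) :=
  L.map (fun e => (e.2.1, e.2.2))

/-- forward disjointness: each variable set avoids later formulas -/
def Fwd : List (Entry σ) → Prop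
  | [] => True
  | e :: L => (∀ e' ∈ L, cnfVars e'.1 ∩ e.2.1 = ∅) ∧ Fwd L

def SatOK (e : Entry σ) : Prop :=
  ∀ C ∈ e.1, ∃ l ∈ C, l.1 ∈ e.2.1 ∧ e.2.2 l.1 = l.2

lemma combine_sat {L : List (Entry σ)} (hF : Fwd L) {e : Entry σ} (he : e ∈ L)
    (hsat : SatOK e) :
    ∀ C ∈ e.1, ∃ l ∈ C, l.1 ∈ domsOf (tl L) ∧ combine (tl L) l.1 = l.2 := by
  induction L with
  | nil => exact absurd he List.not_mem_nil
  | cons e₀ L IH =>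
    intro C hC
    rcases List.mem_cons.mp he with rfl | he'
    · obtain ⟨l, hl, hlV, hlval⟩ := hsat C hC
      refine ⟨l, hl, Finset.mem_union_left _ hlV, ?_⟩
      rw [tl, List.map_cons, combine, if_pos hlV, hlval]
    · obtain ⟨l, hl, hlD, hlval⟩ := IH hF.2 he' C hC
      have hlp : l.1 ∉ e₀.2.1 := by
        intro hmem
        have h1 : l.1 ∈ cnfVars e.1 :=
          clauseVars_subset_cnfVars hC (Finset.mem_image_of_mem _ hl)
        have := hF.1 e he'
        have : l.1 ∈ (∅ : Finset σ) := this ▸ Finset.mem_inter.mpr ⟨h1, hmem⟩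
        simp at this
      refine ⟨l, hl, Finset.mem_union_right _ hlD, ?_⟩
      rw [tl, List.map_cons, combine, if_neg hlp]
      exact hlval

variable (S : FVStructure σ) (s : ℕ) (mT : Finset σ)

/-- a good entry for the peeling construction -/
def Good (e : Entry σ) : Prop :=
  e.2.1 ∈ S.vfam ∧ mT ∩ e.2.1 = ∅ ∧
    (∀ F ∈ suppM S s mT, cnfVars F ∩ e.2.1 = ∅) ∧
    Respects e.2.1 e.2.2 S.Ecnf ∧ SatOK e

lemma mem_suppM_of_contained {𝔜 : Finset (CNF σ)} (h : Contained S s (nbrsM S mT) 𝔜)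
    {F : CNF σ} (hF : F ∈ 𝔜) : F ∈ suppM S s mT := by
  rw [suppM, suppV, Finset.mem_filter]
  exact ⟨h.1 hF, 𝔜, h, hF⟩

lemma rbdry_suppM_subset : rbdry S (suppM S s mT) ⊆ nbrsM S mT := by
  intro V hV
  rw [rbdry, Finset.mem_filter] at hV
  obtain ⟨hVfam, F, hF, hRN, huniq⟩ := hV
  rw [suppM, suppV, Finset.mem_filter] at hF
  obtain ⟨hFfam, 𝔜, hcont, hF𝔜⟩ := hF
  apply hcont.2.2
  rw [rbdry, Finset.mem_filter]
  refine ⟨hVfam, F, hF𝔜, hRN, ?_⟩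
  intro F' hF' hne
  exact huniq F' (mem_suppM_of_contained S s mT hcont hF') hne

lemma peel_aux (𝔛 : Finset (CNF σ)) (hsub : 𝔛 ⊆ S.fam) (hcard : 𝔛.card ≤ s) :
    ∀ (n : ℕ) (𝔊 : Finset (CNF σ)), 𝔊.card ≤ n → suppM S s mT ⊆ 𝔊 → 𝔊 ⊆ 𝔛 →
      ∃ L : List (Entry σ), Fwd L ∧ (∀ e ∈ L, Good S s mT e) ∧
        (∀ e ∈ L, e.1 ∈ 𝔊 ∧ e.1 ∉ suppM S s mT) ∧
        (∀ F ∈ 𝔊, F ∉ suppM S s mT → F ∈ L.map (·.1)) := by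
  intro n
  induction n with
  | zero =>
    intro 𝔊 hn _ _
    refine ⟨[], trivial, by simp, by simp, ?_⟩
    intro F hF _
    have : 𝔊 = ∅ := Finset.card_eq_zero.mp (Nat.le_zero.mp hn)
    rw [this] at hF
    simp at hF
  | succ n IH =>
    intro 𝔊 hn hSup h𝔊𝔛
    by_cases hdone : 𝔊 ⊆ suppM S s mT
    · exact ⟨[], trivial, by simp, by simp, fun F hF hFn => absurd (hdone hF) hFn⟩
    · -- 𝔊 is not contained, so there is a boundary vertex outside N(T)
      have hnotsub : ¬ rbdry S 𝔊 ⊆ nbrsM S mT := by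
        intro hcont
        apply hdone
        intro F hF
        exact mem_suppM_of_contained S s mT
          ⟨Finset.Subset.trans h𝔊𝔛 hsub, le_trans (Finset.card_le_card h𝔊𝔛) hcard, hcont⟩ hF
      obtain ⟨V, hVr, hVn⟩ := Finset.not_subset.mp hnotsub
      rw [rbdry, Finset.mem_filter] at hVr
      obtain ⟨hVfam, F, hF𝔊, hRN, huniq⟩ := hVr
      have hVmT : mT ∩ V = ∅ := by
        rw [nbrsM, Finset.mem_filter] at hVn
        rcases Finset.not_nonempty_iff_eq_empty.mp (fun hne => hVn ⟨hVfam, hne⟩) with h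
        exact h
      have hFnotSup : F ∉ suppM S s mT := by
        intro hFSup
        apply hVn
        apply rbdry_suppM_subset S s mT
        rw [rbdry, Finset.mem_filter]
        refine ⟨hVfam, F, hFSup, hRN, ?_⟩
        intro F' hF' hne
        exact huniq F' (hSup hF') hne
      obtain ⟨α, hresp, hsat⟩ := hRN.2
      have hSup' : suppM S s mT ⊆ 𝔊.erase F := by
        intro F' hF'
        rw [Finset.mem_erase]
        exact ⟨fun h => hFnotSup (h ▸ hF'), hSup hF'⟩
      have hcard' : (𝔊.erase F).card ≤ n := by
        rw [Finset.card_erase_of_mem hF𝔊]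
        omega
      obtain ⟨L', hFwd', hGood', hmem', hcover'⟩ :=
        IH (𝔊.erase F) hcard' hSup' (Finset.Subset.trans (Finset.erase_subset F 𝔊) h𝔊𝔛)
      have hdisjV : ∀ F' ∈ 𝔊, F' ≠ F → cnfVars F' ∩ V = ∅ := by
        intro F' hF' hne
        exact Finset.not_nonempty_iff_eq_empty.mp (huniq F' hF' hne)
      refine ⟨(F, V, α) :: L', ⟨?_, hFwd'⟩, ?_, ?_, ?_⟩
      · intro e' he'
        obtain ⟨he'𝔊, _⟩ := hmem' e' he'
        exact hdisjV e'.1 (Finset.mem_of_mem_erase he'𝔊) (Finset.ne_of_mem_erase he'𝔊)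
      · intro e he
        rcases List.mem_cons.mp he with rfl | he'
        · exact ⟨hVfam, hVmT, fun F' hF' => hdisjV F' (hSup hF')
            (fun h => hFnotSup (h ▸ hF')), hresp, hsat⟩
        · exact hGood' e he'
      · intro e he
        rcases List.mem_cons.mp he with rfl | he'
        · exact ⟨hF𝔊, hFnotSup⟩
        · obtain ⟨h1, h2⟩ := hmem' e he'
          exact ⟨Finset.mem_of_mem_erase h1, h2⟩
      · intro F'' hF'' hF''n
        rcases eq_or_ne F'' F with rfl | hne
        · simp
        · have := hcover' F'' (Finset.mem_erase.mpr ⟨hne, hF''⟩) hF''n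
          simp only [List.map_cons, List.mem_cons]
          right
          exact this

end Stmt8
namespace Stmt8
open MvPolynomial
variable {𝔽 σ : Type} [Field 𝔽] [DecidableEq σ]

lemma mem_clausesOf {S : FVStructure σ} {𝔜 : Finset (CNF σ)} {C : Clause σ} :
    C ∈ clausesOf S 𝔜 ↔ (∃ F ∈ 𝔜, C ∈ F) ∨ C ∈ S.Ecnf := by
  rw [clausesOf, Finset.mem_union, Finset.mem_sup]
  simp

/-- The central stability lemma: substituting the combined assignment of a good list
maps `I(𝔛∧E)` into `I(Sup∧E)`. -/
lemma subst_stab (S : FVStructure σ) (s : ℕ) (mT : Finset σ) {𝔛 : Finset (CNF σ)}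
    (hsupp : suppM S s mT ⊆ 𝔛) (L : List (Entry σ))
    (hGood : ∀ e ∈ L, Good S s mT e) (hFwd : Fwd L)
    (hcover : ∀ F ∈ 𝔛, F ∉ suppM S s mT → F ∈ L.map (·.1)) :
    ∀ Q ∈ idealOf 𝔽 S 𝔛,
      subst (domsOf (tl L)) (combine (tl L)) Q ∈ idealOf 𝔽 S (suppM S s mT) := by
  set D := domsOf (tl L) with hD
  set ρ := combine (tl L) with hρ
  have hresp : Respects D ρ S.Ecnf := by
    refine combine_respects ?_
    intro p hp
    rw [tl, List.mem_map] at hp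
    obtain ⟨e, he, rfl⟩ := hp
    exact (hGood e he).2.2.2.1
  have hSupD : ∀ F ∈ suppM S s mT, ∀ x ∈ cnfVars F, x ∉ D := by
    intro F hF x hx hxD
    rw [hD, mem_domsOf] at hxD
    obtain ⟨p, hp, hxp⟩ := hxD
    rw [tl, List.mem_map] at hp
    obtain ⟨e, he, rfl⟩ := hp
    have := (hGood e he).2.2.1 F hF
    have : x ∈ (∅ : Finset σ) := this ▸ Finset.mem_inter.mpr ⟨hx, hxp⟩
    simp at this
  -- clauses of formulas outside the support are killed
  have hkill : ∀ F ∈ 𝔛, F ∉ suppM S s mT → ∀ C ∈ F,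
      ∃ l ∈ C, l.1 ∈ D ∧ ρ l.1 = l.2 := by
    intro F hF hFn
    obtain ⟨e, he, he1⟩ := List.mem_map.mp (hcover F hF hFn)
    intro C hC
    exact combine_sat hFwd he ((hGood e he).2.2.2.2) C (he1 ▸ hC)
  rintro Q ⟨q, rfl⟩
  rw [subst_mlin]
  set q' : Clause σ → MvPolynomial σ 𝔽 :=
    fun C => if (clauseVars C ∩ D).Nonempty then 0 else subst D ρ (q C) with hq'
  refine ⟨q', ?_⟩
  congr 1
  rw [map_sum]
  have hq'app : ∀ C, q' C = if (clauseVars C ∩ D).Nonempty then 0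
      else subst D ρ (q C) := fun C => by rw [hq']
  have hzero : ∀ C ∈ clausesOf S 𝔛, C ∉ clausesOf S (suppM S s mT) →
      q' C * clausePoly 𝔽 C = 0 := by
    intro C hC hCn
    rw [hq'app]
    rcases mem_clausesOf.mp hC with ⟨F, hF, hCF⟩ | hCE
    · have hFn : F ∉ suppM S s mT := by
        intro h
        exact hCn (mem_clausesOf.mpr (Or.inl ⟨F, h, hCF⟩))
      obtain ⟨l, hl, hlD, _⟩ := hkill F hF hFn C hCF
      rw [if_pos ⟨l.1, Finset.mem_inter.mpr ⟨Finset.mem_image_of_mem _ hl, hlD⟩⟩,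
        zero_mul]
    · exact absurd (mem_clausesOf.mpr (Or.inr hCE)) hCn
  rw [Finset.sum_subset (clausesOf_mono S hsupp) hzero]
  refine Finset.sum_congr rfl fun C hC => ?_
  rw [map_mul, hq'app]
  by_cases htouch : (clauseVars C ∩ D).Nonempty
  · rw [if_pos htouch, zero_mul]
    have hsat : ∃ l ∈ C, l.1 ∈ D ∧ ρ l.1 = l.2 := by
      rcases mem_clausesOf.mp hC with ⟨F, hF, hCF⟩ | hCE
      · by_cases hFSup : F ∈ suppM S s mT
        · obtain ⟨x, hx⟩ := htouch
          rw [Finset.mem_inter] at hx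
          exact absurd hx.2
            (hSupD F hFSup x (clauseVars_subset_cnfVars hCF hx.1))
        · exact hkill F hF hFSup C hCF
      · exact hresp C hCE htouch
    obtain ⟨l, hl, hlD, hlv⟩ := hsat
    rw [subst_clausePoly_zero hl hlD hlv, mul_zero]
  · rw [if_neg htouch]
    have : ∀ x ∈ clauseVars C, x ∉ D := by
      intro x hx hxD
      exact htouch ⟨x, Finset.mem_inter.mpr ⟨hx, hxD⟩⟩
    rw [subst_clausePoly_eq this]

end Stmt8
namespace Stmt8
open MvPolynomial
variable {σ : Type} [DecidableEq σ]

/-- a default respecting assignment for a member of `vfam` -/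
noncomputable def aFor (S : FVStructure σ) (V : Finset σ) : σ → Bool :=
  if h : VRespects V S.Ecnf then h.choose else fun _ => false

lemma aFor_respects {S : FVStructure σ} {V : Finset σ} (h : V ∈ S.vfam) :
    Respects V (aFor S V) S.Ecnf := by
  rw [aFor, dif_pos (S.vfam_respects V h)]
  exact (S.vfam_respects V h).choose_spec

/-- all variable sets avoiding `N(T)` and the support formulas -/
noncomputable def Vbad (S : FVStructure σ) (s : ℕ) (mT : Finset σ) : Finset (Finset σ) :=
  S.vfam.filter fun V => mT ∩ V = ∅ ∧ ∀ F ∈ suppM S s mT, cnfVars F ∩ V = ∅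

lemma mem_Vbad {S : FVStructure σ} {s : ℕ} {mT : Finset σ} {V : Finset σ} :
    V ∈ Vbad S s mT ↔ V ∈ S.vfam ∧ mT ∩ V = ∅ ∧
      ∀ F ∈ suppM S s mT, cnfVars F ∩ V = ∅ := by
  rw [Vbad, Finset.mem_filter]

noncomputable def Lbad (S : FVStructure σ) (s : ℕ) (mT : Finset σ) : List (Entry σ) :=
  (Vbad S s mT).toList.map fun V => ((∅ : CNF σ), V, aFor S V)

lemma Lbad_good (S : FVStructure σ) (s : ℕ) (mT : Finset σ) :
    ∀ e ∈ Lbad S s mT, Good S s mT e := by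
  intro e he
  rw [Lbad, List.mem_map] at he
  obtain ⟨V, hV, rfl⟩ := he
  rw [Finset.mem_toList] at hV
  rw [mem_Vbad] at hV
  exact ⟨hV.1, hV.2.1, hV.2.2, aFor_respects hV.1, fun C hC => absurd hC (by simp)⟩

lemma Lbad_fwd (S : FVStructure σ) (s : ℕ) (mT : Finset σ) : Fwd (Lbad S s mT) := by
  have : ∀ l : List (Entry σ), (∀ e ∈ l, e.1 = (∅ : CNF σ)) → Fwd l := by
    intro l
    induction l with
    | nil => intro _; trivial
    | cons e l IH =>
      intro h
      refine ⟨?_, IH fun e' he' => h e' (List.mem_cons_of_mem _ he')⟩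
      intro e' he'
      rw [h e' (List.mem_cons_of_mem _ he'), cnfVars]
      simp
  refine this _ ?_
  intro e he
  rw [Lbad, List.mem_map] at he
  obtain ⟨V, _, rfl⟩ := he
  rfl

lemma mem_tl_Lbad {S : FVStructure σ} {s : ℕ} {mT : Finset σ}
    {p : Finset σ × (σ → Bool)} :
    p ∈ tl (Lbad S s mT) ↔ ∃ V ∈ Vbad S s mT, p = (V, aFor S V) := by
  rw [tl, Lbad, List.map_map, List.mem_map]
  constructor
  · rintro ⟨V, hV, rfl⟩
    exact ⟨V, Finset.mem_toList.mp hV, rfl⟩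
  · rintro ⟨V, hV, rfl⟩
    exact ⟨V, Finset.mem_toList.mpr hV, rfl⟩

lemma subset_Dhat {S : FVStructure σ} {s : ℕ} {mT : Finset σ} {V : Finset σ}
    (hV : V ∈ Vbad S s mT) : V ⊆ domsOf (tl (Lbad S s mT)) := by
  intro x hx
  rw [mem_domsOf]
  exact ⟨(V, aFor S V), mem_tl_Lbad.mpr ⟨V, hV, rfl⟩, hx⟩

lemma Dhat_mT {S : FVStructure σ} {s : ℕ} {mT : Finset σ} {x : σ}
    (hx : x ∈ domsOf (tl (Lbad S s mT))) : x ∉ mT := by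
  rw [mem_domsOf] at hx
  obtain ⟨p, hp, hxp⟩ := hx
  obtain ⟨V, hV, rfl⟩ := mem_tl_Lbad.mp hp
  rw [mem_Vbad] at hV
  intro hxmT
  have : x ∈ (∅ : Finset σ) := hV.2.1 ▸ Finset.mem_inter.mpr ⟨hxmT, hxp⟩
  simp at this

end Stmt8
set_option maxHeartbeats 1000000 in
open Stmt8 MvPolynomial in
/-- let `T = aT·∏_{x∈mT} x` be a term and suppose `𝔛 ⊆ 𝔉` satisfies
`Sup_s(T) ⊆ 𝔛` and `|𝔛| ≤ s`. Then `R_{I(𝔛∧E)}(T) = R_{I(Sup_s(T)∧E)}(T)`. -/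
theorem stmt8 {𝔽 σ : Type} [Field 𝔽] [Fintype σ] [DecidableEq σ]
    (ord : AdmissibleOrder σ) (S : FVStructure σ) (s : ℕ)
    (aT : 𝔽) (haT : aT ≠ 0) (mT : Finset σ)
    (𝔛 : Finset (CNF σ)) (hsub : 𝔛 ⊆ S.fam)
    (hsupp : suppM S s mT ⊆ 𝔛) (hcard : 𝔛.card ≤ s) :
    redOp ord (idealOf 𝔽 S 𝔛) (MvPolynomial.monomial (monoOf mT) aT)
      = redOp ord (idealOf 𝔽 S (suppM S s mT)) (MvPolynomial.monomial (monoOf mT) aT) := by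
  classical
  set Sup := suppM S s mT with hSupdef
  set T : MvPolynomial σ 𝔽 := monomial (monoOf mT) aT with hTdef
  set Dh := domsOf (tl (Lbad S s mT)) with hDh
  set ρh := combine (tl (Lbad S s mT)) with hρh
  have hTml : mlin T = T := by
    rw [hTdef, mlin_monomial, trunc_eq_self (monoOf_le mT)]
  have hTsupp : T.support = {monoOf mT} := by
    rw [hTdef, support_monomial, if_neg haT]
  have hTfree : Avoids Dh T := by
    intro m hm x hx hxD
    rw [hTsupp, Finset.mem_singleton] at hm
    subst hm
    rw [monoOf_support] at hx
    exact Dhat_mT hxD hx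
  have hstab : ∀ Q ∈ idealOf 𝔽 S Sup, subst Dh ρh Q ∈ idealOf 𝔽 S Sup :=
    subst_stab S s mT (Finset.Subset.refl _) (Lbad S s mT) (Lbad_good S s mT)
      (Lbad_fwd S s mT) (fun F hF hFn => absurd hF hFn)
  obtain ⟨R, hRred, hRfree⟩ :=
    exists_reduction_avoiding ord S Dh ρh hstab T hTml hTfree
  have hRbig : IsReduction ord (idealOf 𝔽 S 𝔛) T R := by
    refine ⟨hRred.1, idealOf_mono S hsupp hRred.2.1, ?_⟩
    intro m hm hred
    have hc : R.coeff m ≠ 0 := MvPolynomial.mem_support_iff.mp hm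
    obtain ⟨Q, hQI, hQL⟩ := (red_iff S 𝔛 m hc).mp hred
    obtain ⟨L, hFwd, hGood, hmem, hcover⟩ :=
      peel_aux S s mT 𝔛 hsub hcard 𝔛.card 𝔛 le_rfl hsupp (Finset.Subset.refl _)
    set D := domsOf (tl L) with hD
    set ρ := combine (tl L) with hρ
    have hDsub : D ⊆ Dh := by
      intro x hx
      rw [hD, mem_domsOf] at hx
      obtain ⟨p, hp, hxp⟩ := hx
      rw [tl, List.mem_map] at hp
      obtain ⟨e, he, rfl⟩ := hp
      obtain ⟨h1, h2, h3, _, _⟩ := hGood e he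
      exact subset_Dhat (mem_Vbad.mpr ⟨h1, h2, h3⟩) hxp
    have hmfree : ∀ x ∈ m.support, x ∉ D :=
      fun x hx hxD => hRfree m hm x hx (hDsub hxD)
    have hQml : mlin Q = Q := idealOf_ml S hQI
    obtain ⟨hQ'L, _⟩ := subst_LeadMonAt ord hQml hQL D ρ hmfree
    have hQ'I : subst D ρ Q ∈ idealOf 𝔽 S Sup :=
      subst_stab S s mT hsupp L hGood hFwd hcover Q hQI
    exact hRred.2.2 m hm ((red_iff S Sup m hc).mpr ⟨subst D ρ Q, hQ'I, hQ'L⟩)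
  have hex1 : ∃ R', IsReduction ord (idealOf 𝔽 S Sup) T R' := ⟨R, hRred⟩
  have hex2 : ∃ R', IsReduction ord (idealOf 𝔽 S 𝔛) T R' := ⟨R, hRbig⟩
  rw [redOp, redOp, dif_pos hex2, dif_pos hex1]
  have e1 : hex2.choose = R := red_unique ord S hex2.choose_spec hRbig
  have e2 : hex1.choose = R := red_unique ord S hex1.choose_spec hRred
  rw [e1, e2]
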